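/- Let g ∈ ℝ^n with g ≠ 0, H ∈ ℝ^{n×n} symmetric, and m_σ(s) = gᵀs + (1/2)sᵀHs + (σ/3)‖s‖³. If s* is a global minimizer of m_σ for some σ ≥ 0, then (H + λ*I)s* = -g where λ* = σ‖s*‖, and H + λ*I is positive semidefinite; in particular λ* ≥ max(0, -λ_min(H)). -/

import Mathlib

open scoped RealInnerProductSpace

set_option maxHeartbeats 1000000 in
theorem stmt_4 (n : ℕ) (hn : 0 < n)
    (g : EuclideanSpace ℝ (Fin n)) (hg : g ≠ 0)
    (H : Matrix (Fin n) (Fin n) ℝ) (hH : H.IsHermitian)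
    (σ : ℝ) (hσ : 0 ≤ σ)
    (s : EuclideanSpace ℝ (Fin n))
    (hmin : ∀ x : EuclideanSpace ℝ (Fin n),
      (inner ℝ g s : ℝ) + (1/2) * (inner ℝ s (WithLp.toLp 2 (H.mulVec (fun i => s i)) : EuclideanSpace ℝ (Fin n)) : ℝ)
          + σ/3 * ‖s‖^3
        ≤ (inner ℝ g x : ℝ) + (1/2) * (inner ℝ x (WithLp.toLp 2 (H.mulVec (fun i => x i)) : EuclideanSpace ℝ (Fin n)) : ℝ)
          + σ/3 * ‖x‖^3) :
    (H + (σ * ‖s‖) • (1 : Matrix (Fin n) (Fin n) ℝ)).mulVec (fun i => s i)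
        = (-g : EuclideanSpace ℝ (Fin n)) ∧
    (H + (σ * ‖s‖) • (1 : Matrix (Fin n) (Fin n) ℝ)).PosSemidef ∧
    max 0 (-(⨅ i, hH.eigenvalues i)) ≤ σ * ‖s‖ := by
  classical
  set T : EuclideanSpace ℝ (Fin n) →ₗ[ℝ] EuclideanSpace ℝ (Fin n) := Matrix.toEuclideanLin H with hT
  have hTapp : ∀ x : EuclideanSpace ℝ (Fin n),
      T x = (WithLp.toLp 2 (H.mulVec (fun i => x i)) : EuclideanSpace ℝ (Fin n)) := fun x => rfl
  have hsym : ∀ x y : EuclideanSpace ℝ (Fin n), (inner ℝ (T x) y : ℝ) = (inner ℝ x (T y) : ℝ) :=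
    Matrix.isHermitian_iff_isSymmetric.1 hH
  set m : EuclideanSpace ℝ (Fin n) → ℝ :=
    fun x => (inner ℝ g x : ℝ) + (1/2) * (inner ℝ x (T x) : ℝ) + σ/3 * ‖x‖^3 with hm
  have hmin' : ∀ x, m s ≤ m x := by
    intro x
    have := hmin x
    simpa [hm, hTapp] using this
  clear_value T m
  have hGpos : (0:ℝ) < ‖g‖ := norm_pos_iff.2 hg
  have hs_ne : s ≠ 0 := by
    intro hs0
    set c : ℝ := (inner ℝ g (T g) : ℝ) with hc
    set t : ℝ := min 1 (‖g‖^2/((|c|/2 + σ/3 * ‖g‖^3)+1)) with ht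
    have ht0 : 0 < t := lt_min one_pos (by positivity)
    have ht1 : t ≤ 1 := min_le_left _ _
    have ht3 : t * ((|c|/2 + σ/3 * ‖g‖^3)+1) ≤ ‖g‖^2 := by
      rw [← le_div_iff₀ (by positivity)]; exact min_le_right _ _
    have hval : m (t • (-g)) = -(t * ‖g‖^2) + t^2/2 * c + σ/3 * (t^3 * ‖g‖^3) := by
      simp only [hm, real_inner_smul_right, inner_neg_right, map_smul, map_neg,
        real_inner_smul_left, inner_neg_left, real_inner_self_eq_norm_sq,
        norm_smul, norm_neg, Real.norm_eq_abs, abs_of_pos ht0, mul_pow, smul_neg, neg_neg]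
      ring
    have hle := hmin' (t • (-g))
    rw [hs0, hval] at hle
    have hms : m 0 = 0 := by simp [hm]
    rw [hms] at hle
    have e1 : t^3 ≤ t^2 := by nlinarith
    have e2 : t^2*c ≤ t^2*|c| := mul_le_mul_of_nonneg_left (le_abs_self c) (sq_nonneg t)
    nlinarith [mul_pos ht0 ht0, hGpos, e2,
      mul_le_mul_of_nonneg_left e1 (show (0:ℝ) ≤ σ/3*‖g‖^3 by positivity),
      mul_le_mul_of_nonneg_left ht3 (le_of_lt ht0)]
  have hsnorm : (0:ℝ) < ‖s‖ := norm_pos_iff.2 hs_ne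
  set L : ℝ := σ * ‖s‖ with hL
  clear_value L
  have expand : ∀ (x y : EuclideanSpace ℝ (Fin n)), (inner ℝ (x+y) (T (x+y)) : ℝ)
      = (inner ℝ x (T x) : ℝ) + 2*(inner ℝ x (T y) : ℝ) + (inner ℝ y (T y) : ℝ) := by
    intro x y
    have h1 : (inner ℝ y (T x) : ℝ) = (inner ℝ x (T y) : ℝ) := by
      rw [← hsym x y, real_inner_comm]
    simp only [map_add, inner_add_left, inner_add_right, h1]
    ring
  have foc : g + T s + L • s = 0 := by
    have hinner : ∀ v : EuclideanSpace ℝ (Fin n), (inner ℝ (g + T s + L • s) v : ℝ) = 0 := by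
      intro v
      set q : ℝ → ℝ := fun t => ‖s‖^2 + ((2*(inner ℝ s v : ℝ))*t + ‖v‖^2*t^2) with hqdef
      have hq : ∀ t : ℝ, ‖s + t • v‖^2 = q t := by
        intro t
        rw [hqdef]
        simp only [norm_add_sq_real, real_inner_smul_right, norm_smul, Real.norm_eq_abs,
          mul_pow, sq_abs]
        ring
      have hq0 : q 0 = ‖s‖^2 := by simp [hqdef]
      have hq0ne : q 0 ≠ 0 := by rw [hq0]; positivity
      have hsq0 : Real.sqrt (q 0) = ‖s‖ := by rw [hq0, Real.sqrt_sq hsnorm.le]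
      set φ : ℝ → ℝ := fun t =>
        ((inner ℝ g s : ℝ) + 1/2*(inner ℝ s (T s) : ℝ))
        + (((inner ℝ g v : ℝ) + (inner ℝ s (T v) : ℝ))*t
        + (1/2*(inner ℝ v (T v) : ℝ))*t^2 + σ/3*(q t * Real.sqrt (q t))) with hphidef
      have hphi : ∀ t, m (s + t • v) = φ t := by
        intro t
        have h3 : ‖s + t • v‖^3 = q t * Real.sqrt (q t) := by
          rw [← hq t, Real.sqrt_sq (norm_nonneg _)]; ring
        have e1 := expand s (t • v)
        simp only [map_smul, real_inner_smul_left, real_inner_smul_right] at e1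
        simp only [hm, hphidef]
        rw [inner_add_right, real_inner_smul_right, e1, h3]
        ring
      have hderq : HasDerivAt q (2*(inner ℝ s v : ℝ)) 0 := by
        have h1 : HasDerivAt (fun t:ℝ => (2*(inner ℝ s v : ℝ))*t) (2*(inner ℝ s v : ℝ)) 0 := by
          simpa using (hasDerivAt_id (0:ℝ)).const_mul (2*(inner ℝ s v : ℝ))
        have h2 : HasDerivAt (fun t:ℝ => ‖v‖^2*t^2) 0 0 := by
          simpa using (hasDerivAt_pow 2 (0:ℝ)).const_mul (‖v‖^2)
        have h3 := (h1.add h2).const_add (‖s‖^2)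
        rw [add_zero] at h3
        exact h3
      have hsqrt : HasDerivAt (fun t => Real.sqrt (q t))
          (1/(2*Real.sqrt (q 0)) * (2*(inner ℝ s v:ℝ))) 0 :=
        (Real.hasDerivAt_sqrt hq0ne).comp 0 hderq
      have hprod : HasDerivAt (fun t => q t * Real.sqrt (q t)) (3*‖s‖*(inner ℝ s v : ℝ)) 0 := by
        have h := hderq.mul hsqrt
        refine h.congr_deriv ?_
        rw [hsq0, hq0]
        field_simp
        ring
      have hphider : HasDerivAt φ
          (((inner ℝ g v : ℝ) + (inner ℝ s (T v) : ℝ)) + σ*‖s‖*(inner ℝ s v : ℝ)) 0 := by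
        have hlin : HasDerivAt (fun t:ℝ => ((inner ℝ g v : ℝ) + (inner ℝ s (T v) : ℝ))*t)
            ((inner ℝ g v : ℝ) + (inner ℝ s (T v) : ℝ)) 0 := by
          simpa using (hasDerivAt_id (0:ℝ)).const_mul ((inner ℝ g v : ℝ) + (inner ℝ s (T v) : ℝ))
        have hquad : HasDerivAt (fun t:ℝ => (1/2*(inner ℝ v (T v):ℝ))*t^2) 0 0 := by
          simpa using (hasDerivAt_pow 2 (0:ℝ)).const_mul (1/2*(inner ℝ v (T v):ℝ))
        have hcube := hprod.const_mul (σ/3)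
        have hh := (((hlin.add hquad).add hcube).const_add
          ((inner ℝ g s : ℝ) + 1/2*(inner ℝ s (T s) : ℝ)))
        have : φ = fun t => ((inner ℝ g s : ℝ) + 1/2*(inner ℝ s (T s) : ℝ))
            + ((((inner ℝ g v : ℝ) + (inner ℝ s (T v) : ℝ))*t
            + (1/2*(inner ℝ v (T v) : ℝ))*t^2) + σ/3*(q t * Real.sqrt (q t))) := by
          funext t; rw [hphidef]
        rw [this]
        refine hh.congr_deriv ?_
        ring
      have hlocal : IsLocalMin φ 0 := by
        apply Filter.Eventually.of_forall
        intro t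
        have h0 : φ 0 = m s := by rw [← hphi 0]; simp
        rw [h0, ← hphi t]
        exact hmin' _
      have hzero := hlocal.hasDerivAt_eq_zero hphider
      rw [inner_add_left, inner_add_left, real_inner_smul_left, hsym s v, hL]
      linarith [hzero]
    have := hinner (g + T s + L • s)
    exact inner_self_eq_zero.mp this
  set Q : EuclideanSpace ℝ (Fin n) → ℝ := fun x => (inner ℝ x (T x) : ℝ) + L * ‖x‖^2 with hQdef
  clear_value Q
  have key : ∀ d : EuclideanSpace ℝ (Fin n), (inner ℝ s d : ℝ) = -(1/2)*‖d‖^2 → 0 ≤ Q d := by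
    intro d hd
    have h2 : ‖s + d‖^2 = ‖s‖^2 := by
      rw [norm_add_sq_real, hd]; ring
    have hnorm : ‖s + d‖ = ‖s‖ := by
      calc ‖s + d‖ = Real.sqrt (‖s + d‖^2) := (Real.sqrt_sq (norm_nonneg _)).symm
        _ = Real.sqrt (‖s‖^2) := by rw [h2]
        _ = ‖s‖ := Real.sqrt_sq (norm_nonneg _)
    have hle := hmin' (s + d)
    have e1 := expand s d
    have hgd : (inner ℝ g d : ℝ) = -((inner ℝ s (T d) : ℝ) + L * (inner ℝ s d : ℝ)) := by
      have h0 : (inner ℝ (g + T s + L • s) d : ℝ) = 0 := by rw [foc, inner_zero_left]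
      rw [inner_add_left, inner_add_left, real_inner_smul_left, hsym s d] at h0
      linarith
    have hms : m (s + d) = m s + (1/2) * Q d := by
      simp only [hm, hQdef]
      rw [inner_add_right, e1, hnorm, hgd, hd]
      ring
    rw [hms] at hle
    have := (le_add_iff_nonneg_right (m s)).mp hle
    linarith
  have hQpos : ∀ v : EuclideanSpace ℝ (Fin n), (inner ℝ s v : ℝ) ≠ 0 → 0 ≤ Q v := by
    intro v hv
    have hvne : v ≠ 0 := by rintro rfl; simp at hv
    have hvn : (0:ℝ) < ‖v‖ := norm_pos_iff.2 hvne
    set c : ℝ := -2*(inner ℝ s v : ℝ)/‖v‖^2 with hcdef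
    clear_value c
    have hcne : c ≠ 0 := by
      rw [hcdef]
      intro h
      rcases div_eq_zero_iff.1 h with h' | h'
      · apply hv; linarith
      · exact absurd h' (by positivity)
    have hv2 : ‖v‖^2 ≠ 0 := by positivity
    have hc : c * ‖v‖^2 = -2*(inner ℝ s v : ℝ) := by
      rw [hcdef]; exact div_mul_cancel₀ _ hv2
    have hd : (inner ℝ s (c • v) : ℝ) = -(1/2)*‖c • v‖^2 := by
      rw [real_inner_smul_right, norm_smul, Real.norm_eq_abs, mul_pow, sq_abs]
      linear_combination ((1/2) * c) * hc
    have h := key (c • v) hd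
    have hQc : Q (c • v) = c^2 * Q v := by
      simp only [hQdef, map_smul, real_inner_smul_left, real_inner_smul_right, norm_smul,
        Real.norm_eq_abs, mul_pow, sq_abs]
      ring
    rw [hQc] at h
    have hc2 : 0 < c^2 := by positivity
    nlinarith
  have hQall : ∀ v : EuclideanSpace ℝ (Fin n), 0 ≤ Q v := by
    intro v
    rcases ne_or_eq (inner ℝ s v : ℝ) 0 with hv | hv
    · exact hQpos v hv
    · have hb : 0 ≤ Q s := by
        apply hQpos s
        rw [real_inner_self_eq_norm_sq]
        positivity
      by_contra hneg
      push_neg at hneg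
      set A : ℝ := (inner ℝ s (T v) : ℝ) with hA
      clear_value A
      have hexp : ∀ ε : ℝ, Q (v + ε • s) = Q v + ε*(2*A) + ε^2 * Q s := by
        intro ε
        have e1 := expand v (ε • s)
        simp only [map_smul, real_inner_smul_left, real_inner_smul_right] at e1
        have hv' : (inner ℝ v s : ℝ) = 0 := by rw [real_inner_comm]; exact hv
        have e2 : ‖v + ε • s‖^2 = ‖v‖^2 + ε^2*‖s‖^2 := by
          rw [norm_add_sq_real, real_inner_smul_right, hv', norm_smul,
            Real.norm_eq_abs, mul_pow, sq_abs]
          ring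
        have e3 : (inner ℝ v (T s) : ℝ) = A := by
          rw [← hsym v s, real_inner_comm]; exact hA.symm
        simp only [hQdef]
        rw [e1, e2, e3]
        ring
      have hnonneg : ∀ ε : ℝ, ε ≠ 0 → 0 ≤ Q v + ε*(2*A) + ε^2 * Q s := by
        intro ε hε
        rw [← hexp ε]
        apply hQpos
        rw [inner_add_right, real_inner_smul_right, hv, real_inner_self_eq_norm_sq]
        simpa using mul_ne_zero hε (by positivity : ‖s‖^2 ≠ 0)
      rcases eq_or_lt_of_le hb with hb0 | hb0
      · have h1 := hnonneg 1 one_ne_zero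
        have h2 := hnonneg (-1) (by norm_num)
        nlinarith
      · set e : ℝ := Real.sqrt (-(Q v)/(2*Q s)) with he
        have hfrac : 0 < -(Q v)/(2*Q s) := by
          apply div_pos (by linarith) (by linarith)
        have hepos : 0 < e := Real.sqrt_pos.2 hfrac
        have hsq : e^2 = -(Q v)/(2*Q s) := Real.sq_sqrt hfrac.le
        have h1 := hnonneg e (ne_of_gt hepos)
        have h2 := hnonneg (-e) (by exact neg_ne_zero.2 (ne_of_gt hepos))
        have he2 : e^2 * (2*Q s) = -(Q v) := by
          rw [hsq]; exact div_mul_cancel₀ _ (by linarith)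
        nlinarith
  have hsymm2 : (H + L • (1 : Matrix (Fin n) (Fin n) ℝ)).IsHermitian := by
    apply hH.add
    unfold Matrix.IsHermitian
    rw [Matrix.conjTranspose_smul, Matrix.conjTranspose_one]
    simp
  have hfoc : T s + L • s = -g := by
    have h1 : T s + L • s + g = 0 := by rw [← foc]; abel
    exact eq_neg_of_add_eq_zero_left h1
  have hmv : ((H + L • (1 : Matrix (Fin n) (Fin n) ℝ)).mulVec (fun i => s i))
      = (-g : EuclideanSpace ℝ (Fin n)) := by
    rw [hTapp] at hfoc
    rw [Matrix.add_mulVec, Matrix.smul_mulVec, Matrix.one_mulVec]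
    exact congrArg WithLp.ofLp hfoc
  have hdot : ∀ x y : EuclideanSpace ℝ (Fin n),
      (inner ℝ x y : ℝ) = dotProduct (fun i => x i) (fun i => y i) := by
    intro x y
    simp [PiLp.inner_apply, dotProduct, mul_comm]
  have hpsd : (H + L • (1 : Matrix (Fin n) (Fin n) ℝ)).PosSemidef := by
    refine Matrix.PosSemidef.of_dotProduct_mulVec_nonneg hsymm2 fun x => ?_
    set x' : EuclideanSpace ℝ (Fin n) := (WithLp.equiv 2 (Fin n → ℝ)).symm x with hx'
    have hx := hQall x'
    simp only [hQdef] at hx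
    have e1 : (inner ℝ x' (T x') : ℝ) = dotProduct x (H.mulVec x) := by
      rw [hTapp, hdot]
      rfl
    have e2 : ‖x'‖^2 = dotProduct x x := by
      rw [← real_inner_self_eq_norm_sq, hdot]
      rfl
    rw [e1, e2] at hx
    rw [Matrix.add_mulVec, Matrix.smul_mulVec, Matrix.one_mulVec, dotProduct_add,
      dotProduct_smul, star_trivial]
    simpa [smul_eq_mul] using hx
  have hnonemp : Nonempty (Fin n) := ⟨⟨0, hn⟩⟩
  have heig : ∀ i, -L ≤ hH.eigenvalues i := by
    intro i
    have hnv : ‖(hH.eigenvectorBasis i : EuclideanSpace ℝ (Fin n))‖ = 1 :=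
      hH.eigenvectorBasis.orthonormal.1 i
    have hx := hQall (hH.eigenvectorBasis i)
    simp only [hQdef] at hx
    have hTv : T (hH.eigenvectorBasis i)
        = hH.eigenvalues i • (hH.eigenvectorBasis i : EuclideanSpace ℝ (Fin n)) := by
      rw [hTapp]
      exact congrArg (WithLp.toLp 2) (hH.mulVec_eigenvectorBasis i)
    rw [hTv, real_inner_smul_right, real_inner_self_eq_norm_sq, hnv] at hx
    norm_num at hx
    linarith
  refine ⟨hmv, hpsd, max_le (by rw [hL]; exact mul_nonneg hσ (norm_nonneg _)) ?_⟩
  rw [neg_le]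
  exact le_ciInf fun i => by linarith [heig i]
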